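/- For any distinct indices i_2,...,i_k ∈ {1,...,n}, one has ∑_{j=1}^n d_{j,i_2,...,i_k} p_j(z) = 0 in the algebra A_z. In fact, in the field of rational functions ℂ(t_1,...,t_k) the identity ∑_{j=1}^n d_{j,i_2,...,i_k} · a_j/f_j(t,z) = ∑_{m=1}^k (-1)^{m+1} M_m · (∑_{i=1}^n a_i b_i^m/f_i(t,z)) holds, where M_m is the (k-1)×(k-1) minor of the rows i_2,...,i_k of the matrix b with the m-th column deleted. -/

import Mathlib

open MvPolynomial

noncomputable section

/-- The determinant `d_{l 1, …, l k}` of the `k × k` matrix whose `m`-th column consists of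
`b (l m) 1, …, b (l m) k`. -/
def dd {n k : ℕ} (b : Fin n → Fin k → ℂ) (l : Fin k → Fin n) : ℂ :=
  Matrix.det (Matrix.of fun j m => b (l m) j)

/-- `f_i(t,z) = ∑_j b_i^j t_j + z_i` as a polynomial in `t = (t_1,…,t_k)`. -/
def fpoly {n k : ℕ} (b : Fin n → Fin k → ℂ) (z : Fin n → ℂ) (i : Fin n) :
    MvPolynomial (Fin k) ℂ :=
  (∑ j, C (b i j) * X j) + C (z i)

/-- `f_{i_1,…,i_{k+1}}(z) = ∑_{l=1}^{k+1} (-1)^{l-1} d_{i_1,…,î_l,…,i_{k+1}} z_{i_l}`. -/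
def fF {n k : ℕ} (b : Fin n → Fin k → ℂ) (z : Fin n → ℂ) (I : Fin (k + 1) → Fin n) : ℂ :=
  ∑ l : Fin (k + 1), (-1) ^ (l : ℕ) * dd b (I ∘ l.succAbove) * z (I l)

/-- The discriminant `Δ ⊂ ℂⁿ`, the union over `1 ≤ i_1 < … < i_{k+1} ≤ n` of the zero sets of
the `f_{i_1,…,i_{k+1}}`. -/
def discr {n k : ℕ} (b : Fin n → Fin k → ℂ) : Set (Fin n → ℂ) :=
  {z | ∃ I : Fin (k + 1) → Fin n, StrictMono I ∧ fF b z I = 0}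

/-- The multiplicative set generated by `f_1(t,z), …, f_n(t,z)`. -/
def Sz {n k : ℕ} (b : Fin n → Fin k → ℂ) (z : Fin n → ℂ) :
    Submonoid (MvPolynomial (Fin k) ℂ) :=
  Submonoid.closure (Set.range (fpoly b z))

/-- `R_z`, the localization of `ℂ[t_1,…,t_k]` at the multiplicative set generated by the
`f_i(t,z)`. -/
abbrev Rz {n k : ℕ} (b : Fin n → Fin k → ℂ) (z : Fin n → ℂ) :=
  Localization (Sz b z)

lemma fpoly_mem {n k : ℕ} (b : Fin n → Fin k → ℂ) (z : Fin n → ℂ) (i : Fin n) :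
    fpoly b z i ∈ Sz b z :=
  Submonoid.subset_closure ⟨i, rfl⟩

/-- `∂Φ/∂t_m = ∑_i a_i b_i^m / f_i(t,z)` as an element of `R_z`. -/
def dPhi {n k : ℕ} (a : Fin n → ℂ) (b : Fin n → Fin k → ℂ) (z : Fin n → ℂ)
    (m : Fin k) : Rz b z :=
  ∑ i, Localization.mk (C (a i * b i m)) ⟨fpoly b z i, fpoly_mem b z i⟩

/-- The ideal `I_z ⊆ R_z` generated by the `∂Φ/∂t_m`, `m = 1,…,k`. -/
def Iz {n k : ℕ} (a : Fin n → ℂ) (b : Fin n → Fin k → ℂ) (z : Fin n → ℂ) :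
    Ideal (Rz b z) :=
  Ideal.span (Set.range (dPhi a b z))

/-- The algebra `A_z = R_z / I_z`. -/
abbrev Az {n k : ℕ} (a : Fin n → ℂ) (b : Fin n → Fin k → ℂ) (z : Fin n → ℂ) :=
  Rz b z ⧸ Iz a b z

/-- `p_j(z) = [a_j / f_j(t,z)] ∈ A_z`. -/
def pz {n k : ℕ} (a : Fin n → ℂ) (b : Fin n → Fin k → ℂ) (z : Fin n → ℂ)
    (j : Fin n) : Az a b z :=
  Ideal.Quotient.mk _ (Localization.mk (C (a j)) ⟨fpoly b z j, fpoly_mem b z j⟩)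

/-- The canonical map `ℂ → A_z` (scalars). -/
def cA {n k : ℕ} (a : Fin n → ℂ) (b : Fin n → Fin k → ℂ) (z : Fin n → ℂ)
    (c : ℂ) : Az a b z :=
  @algebraMap ℂ (Az a b z) _ _ (Ideal.instAlgebraQuotient ℂ (Iz a b z)) c

/-- `w_{i_1,…,i_k} = d_{i_1,…,i_k} p_{i_1}(z) ⋯ p_{i_k}(z) ∈ A_z`. -/
def wz {n k : ℕ} (a : Fin n → ℂ) (b : Fin n → Fin k → ℂ) (z : Fin n → ℂ)
    (l : Fin k → Fin n) : Az a b z :=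
  cA a b z (dd b l) * ∏ m, pz a b z (l m)

/-- The image of a polynomial in the field of rational functions `ℂ(t_1,…,t_k)`. -/
def toF {k : ℕ} (q : MvPolynomial (Fin k) ℂ) : FractionRing (MvPolynomial (Fin k) ℂ) :=
  algebraMap _ _ q

/-- Fix `n > k ≥ 1` (here `k = k' + 1`), numbers `b_i^j` with all determinants
`d_{i_1,…,i_k}` (distinct indices) nonzero, weights `a_i ∈ ℂ^×` with `|a| = ∑ a_i ≠ 0`, and
`z ∈ ℂⁿ − Δ`.  Then for any distinct indices `i_2,…,i_k` (the tuple `I`), in the field of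
rational functions `ℂ(t_1,…,t_k)` the identity
`∑_j d_{j,i_2,…,i_k} a_j/f_j = ∑_m (-1)^{m+1} M_m (∑_i a_i b_i^m / f_i)` holds, where `M_m` is
the `(k-1)×(k-1)` minor of the rows `i_2,…,i_k` of `b` with the `m`-th column deleted; and
consequently `∑_j d_{j,i_2,…,i_k} p_j(z) = 0` in the algebra `A_z`. -/
lemma laplace (n k' : ℕ) (b : Fin n → Fin (k' + 1) → ℂ) (I : Fin k' → Fin n) (j : Fin n) :
    dd b (Fin.cons j I) = ∑ m : Fin (k' + 1),
      (-1) ^ (m : ℕ) * Matrix.det (Matrix.of fun r c : Fin k' => b (I r) (m.succAbove c)) * b j m := by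
  unfold dd
  rw [Matrix.det_succ_column_zero]
  refine Finset.sum_congr rfl fun m _ => ?_
  have : Matrix.det (Matrix.of fun r c : Fin k' => b (I r) (m.succAbove c))
      = Matrix.det ((Matrix.of fun r c : Fin (k'+1) =>
          b ((Fin.cons j I : Fin (k'+1) → Fin n) c) r).submatrix m.succAbove Fin.succ) := by
    rw [← Matrix.det_transpose]
    congr 1
  rw [this]
  simp [mul_comm, mul_assoc, mul_left_comm]

lemma keygen (n k' : ℕ) (b : Fin n → Fin (k' + 1) → ℂ) (I : Fin k' → Fin n)
    (a : Fin n → ℂ) {A : Type} [CommRing A] (g : ℂ →+* A) (v : Fin n → A) :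
    ∑ j, g (dd b (Fin.cons j I) * a j) * v j
      = ∑ m : Fin (k' + 1),
          g ((-1) ^ (m : ℕ) * Matrix.det (Matrix.of fun r c : Fin k' => b (I r) (m.succAbove c))) *
          ∑ i, g (a i * b i m) * v i := by
  have h1 : ∀ j, ∑ m : Fin (k' + 1),
      g ((-1) ^ (m : ℕ) * Matrix.det (Matrix.of fun r c : Fin k' => b (I r) (m.succAbove c))) *
        (g (a j * b j m) * v j) = g (dd b (Fin.cons j I) * a j) * v j := by
    intro j
    simp_rw [← mul_assoc, ← map_mul, ← Finset.sum_mul]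
    congr 1
    rw [← map_sum, laplace n k' b I j, Finset.sum_mul]
    congr 1
    exact Finset.sum_congr rfl fun m _ => by ring
  calc ∑ j, g (dd b (Fin.cons j I) * a j) * v j
      = ∑ j, ∑ m : Fin (k' + 1),
          g ((-1) ^ (m : ℕ) * Matrix.det (Matrix.of fun r c : Fin k' => b (I r) (m.succAbove c))) *
          (g (a j * b j m) * v j) := (Finset.sum_congr rfl fun j _ => (h1 j).symm)
    _ = ∑ m : Fin (k' + 1), ∑ j,
          g ((-1) ^ (m : ℕ) * Matrix.det (Matrix.of fun r c : Fin k' => b (I r) (m.succAbove c))) *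
          (g (a j * b j m) * v j) := by rw [Finset.sum_comm]
    _ = _ := Finset.sum_congr rfl fun m _ => (Finset.mul_sum _ _ _).symm

set_option maxHeartbeats 1000000 in
set_option synthInstance.maxHeartbeats 400000 in
theorem stmt6 (n k' : ℕ) (hnk : k' + 1 < n) (b : Fin n → Fin (k' + 1) → ℂ)
    (hd : ∀ l : Fin (k' + 1) → Fin n, Function.Injective l → dd b l ≠ 0)
    (a : Fin n → ℂ) (ha : ∀ i, a i ≠ 0) (hsum : ∑ i, a i ≠ 0)
    (z : Fin n → ℂ) (hz : z ∉ discr b)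
    (I : Fin k' → Fin n) (hI : Function.Injective I) :
    (∑ j : Fin n, toF (C (dd b (Fin.cons j I) * a j)) / toF (fpoly b z j)
      = ∑ m : Fin (k' + 1),
          toF (C ((-1) ^ (m : ℕ) *
            Matrix.det (Matrix.of fun r c : Fin k' => b (I r) (m.succAbove c)))) *
          ∑ i : Fin n, toF (C (a i * b i m)) / toF (fpoly b z i)) ∧
    ∑ j : Fin n, cA a b z (dd b (Fin.cons j I)) * pz a b z j = 0 := by
  constructor
  · simp_rw [div_eq_mul_inv]
    exact keygen n k' b I a
      ((algebraMap (MvPolynomial (Fin (k'+1)) ℂ)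
        (FractionRing (MvPolynomial (Fin (k'+1)) ℂ))).comp (C : ℂ →+* _))
      (fun j => (toF (fpoly b z j))⁻¹)
  · set g2 : ℂ →+* Rz b z :=
      (algebraMap (MvPolynomial (Fin (k'+1)) ℂ) (Rz b z)).comp (C : ℂ →+* _) with hg2
    set v : Fin n → Rz b z :=
      fun j => Localization.mk 1 ⟨fpoly b z j, fpoly_mem b z j⟩ with hv
    have hmk : ∀ (x : ℂ) (j : Fin n),
        Localization.mk (C x) ⟨fpoly b z j, fpoly_mem b z j⟩ = g2 x * v j := by
      intro x j
      rw [hg2, hv]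
      simp only [RingHom.comp_apply]
      rw [← Localization.mk_one_eq_algebraMap, Localization.mk_mul]
      simp
    have hdPhi : ∀ m : Fin (k'+1), dPhi a b z m = ∑ i, g2 (a i * b i m) * v i := by
      intro m
      unfold dPhi
      exact Finset.sum_congr rfl fun i _ => hmk _ i
    have hS : (∑ j, g2 (dd b (Fin.cons j I) * a j) * v j) ∈ Iz a b z := by
      rw [keygen n k' b I a g2 v]
      refine Ideal.sum_mem _ fun m _ => ?_
      rw [← hdPhi m]
      exact Ideal.mul_mem_left _ _ (Ideal.subset_span ⟨m, rfl⟩)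
    have hterm : ∀ j : Fin n,
        cA a b z (dd b (Fin.cons j I)) * pz a b z j
          = Ideal.Quotient.mk (Iz a b z) (g2 (dd b (Fin.cons j I) * a j) * v j) := by
      intro j
      rw [← hmk, cA, pz, IsScalarTower.algebraMap_apply ℂ (Rz b z) (Az a b z),
        Ideal.Quotient.algebraMap_eq, ← map_mul]
      congr 1
      rw [IsScalarTower.algebraMap_apply ℂ (MvPolynomial (Fin (k'+1)) ℂ) (Rz b z),
        ← Localization.mk_one_eq_algebraMap, Localization.mk_mul]
      rw [MvPolynomial.algebraMap_eq, ← C_mul, one_mul]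
    calc ∑ j, cA a b z (dd b (Fin.cons j I)) * pz a b z j
        = Ideal.Quotient.mk (Iz a b z) (∑ j, g2 (dd b (Fin.cons j I) * a j) * v j) := by
          rw [map_sum]; exact Finset.sum_congr rfl fun j _ => hterm j
      _ = 0 := (Ideal.Quotient.eq_zero_iff_mem).mpr hS
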